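/- Let ψ be a 2-form on a Euclidean vector space of even dimension n = 2m (m ≥ 2), and let {v₁,w₁,…,v_m,w_m} be an orthonormal basis diagonalizing ψ: ψ(v_α,w_β) = λ_α δ_{αβ}, ψ(v_α,v_β) = ψ(w_α,w_β) = 0. Let R be an algebraic curvature tensor with nonnegative isotropic curvature, and suppose Σλ_α² > 0. Then Σ_{i,j,k,l} (Ric^{ij} g^{kl} - R^{ijkl}) ψ_{ik} ψ_{jl} ≥ Σ_{α≠β} (|λ_α| - |λ_β|)² |R(v_α,w_α,v_β,w_β)| ≥ 0, and the inequality is strict if R has positive isotropic curvature. -/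

import Mathlib

private lemma aux_sum1 (m : ℕ) (lam : Fin m → ℝ) (F : (Fin m ⊕ Fin m) → (Fin m ⊕ Fin m) → ℝ)
    (Ps : (Fin m ⊕ Fin m) → (Fin m ⊕ Fin m) → ℝ)
    (h1 : ∀ α β, Ps (Sum.inl α) (Sum.inr β) = if α = β then lam α else 0)
    (h2 : ∀ α β, Ps (Sum.inr α) (Sum.inl β) = if α = β then -lam α else 0)
    (h3 : ∀ α β, Ps (Sum.inl α) (Sum.inl β) = 0)
    (h4 : ∀ α β, Ps (Sum.inr α) (Sum.inr β) = 0) :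
    (∑ i, ∑ j, ∑ k, F i j * Ps i k * Ps j k)
      = ∑ α, (F (Sum.inl α) (Sum.inl α) + F (Sum.inr α) (Sum.inr α)) * lam α ^ 2 := by
  simp only [Fintype.sum_sum_type, h1, h2, h3, h4, mul_ite, ite_mul, mul_zero, zero_mul,
    Finset.sum_ite_eq, Finset.mem_univ, if_true, Finset.sum_const_zero, add_zero, zero_add,
    Finset.sum_ite_eq', mul_neg, neg_mul, neg_neg, Finset.sum_neg_distrib]
  ring_nf
  rw [← Finset.sum_add_distrib]

private lemma aux_sum2 (m : ℕ) (lam : Fin m → ℝ)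
    (G : (Fin m ⊕ Fin m) → (Fin m ⊕ Fin m) → (Fin m ⊕ Fin m) → (Fin m ⊕ Fin m) → ℝ)
    (Ps : (Fin m ⊕ Fin m) → (Fin m ⊕ Fin m) → ℝ)
    (h1 : ∀ α β, Ps (Sum.inl α) (Sum.inr β) = if α = β then lam α else 0)
    (h2 : ∀ α β, Ps (Sum.inr α) (Sum.inl β) = if α = β then -lam α else 0)
    (h3 : ∀ α β, Ps (Sum.inl α) (Sum.inl β) = 0)
    (h4 : ∀ α β, Ps (Sum.inr α) (Sum.inr β) = 0) :
    (∑ i, ∑ j, ∑ k, ∑ l, G i j k l * Ps i k * Ps j l)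
      = ∑ α, ∑ β, (G (Sum.inl α) (Sum.inl β) (Sum.inr α) (Sum.inr β)
          - G (Sum.inl α) (Sum.inr β) (Sum.inr α) (Sum.inl β)
          - G (Sum.inr α) (Sum.inl β) (Sum.inl α) (Sum.inr β)
          + G (Sum.inr α) (Sum.inr β) (Sum.inl α) (Sum.inl β)) * (lam α * lam β) := by
  simp only [Fintype.sum_sum_type, h1, h2, h3, h4, mul_ite, ite_mul, mul_zero, zero_mul,
    Finset.sum_ite_eq, Finset.mem_univ, if_true, Finset.sum_const_zero, add_zero, zero_add,
    mul_neg, neg_mul, neg_neg, Finset.sum_neg_distrib]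
  rw [← Finset.sum_add_distrib]
  congr 1; funext α
  simp only [neg_zero, zero_add, add_zero, ← Finset.sum_neg_distrib, ← Finset.sum_add_distrib]
  congr 1; funext β; ring

private lemma aux_ineq (a c S k : ℝ) (hS : 2 * |k| ≤ S) :
    (|a| - |c|) ^ 2 * |k| ≤ (a ^ 2 + c ^ 2) / 2 * S - 2 * (a * c) * k := by
  have h1 : a * c * k ≤ |a| * |c| * |k| := by
    calc a * c * k ≤ |a * c * k| := le_abs_self _
    _ = |a| * |c| * |k| := by rw [abs_mul, abs_mul]
  have h3 : (a ^ 2 + c ^ 2) / 2 * (2 * |k|) ≤ (a ^ 2 + c ^ 2) / 2 * S :=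
    mul_le_mul_of_nonneg_left hS (by positivity)
  nlinarith [sq_abs a, sq_abs c, abs_nonneg k]

private lemma aux_nonneg (a c S k : ℝ) (hS : 2 * |k| ≤ S) :
    0 ≤ (a ^ 2 + c ^ 2) / 2 * S - 2 * (a * c) * k :=
  le_trans (by positivity) (aux_ineq a c S k hS)

private lemma aux_pos (a c S k : ℝ) (hS : 2 * |k| < S) (h : 0 < a ^ 2 + c ^ 2) :
    0 < (a ^ 2 + c ^ 2) / 2 * S - 2 * (a * c) * k := by
  have h1 : a * c * k ≤ |a| * |c| * |k| := by
    calc a * c * k ≤ |a * c * k| := le_abs_self _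
    _ = |a| * |c| * |k| := by rw [abs_mul, abs_mul]
  have h2 : 2 * |a| * |c| ≤ a ^ 2 + c ^ 2 := by
    nlinarith [sq_nonneg (|a| - |c|), sq_abs a, sq_abs c]
  have h3 : (a ^ 2 + c ^ 2) / 2 * (2 * |k|) < (a ^ 2 + c ^ 2) / 2 * S :=
    mul_lt_mul_of_pos_left hS (by positivity)
  nlinarith [mul_nonneg (sub_nonneg.mpr h2) (abs_nonneg k)]

set_option maxHeartbeats 2000000 in
theorem stmt_14 (m : ℕ) (hm : 2 ≤ m)
    (b : OrthonormalBasis (Fin m ⊕ Fin m) ℝ (EuclideanSpace ℝ (Fin m ⊕ Fin m)))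
    (R : EuclideanSpace ℝ (Fin m ⊕ Fin m) →ₗ[ℝ] EuclideanSpace ℝ (Fin m ⊕ Fin m) →ₗ[ℝ]
      EuclideanSpace ℝ (Fin m ⊕ Fin m) →ₗ[ℝ] EuclideanSpace ℝ (Fin m ⊕ Fin m) →ₗ[ℝ] ℝ)
    (Ric : EuclideanSpace ℝ (Fin m ⊕ Fin m) → EuclideanSpace ℝ (Fin m ⊕ Fin m) → ℝ)
    (ψ : EuclideanSpace ℝ (Fin m ⊕ Fin m) → EuclideanSpace ℝ (Fin m ⊕ Fin m) → ℝ)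
    (lam : Fin m → ℝ)
    (hanti : ∀ x y z w, R x y z w = - R y x z w)
    (hpair : ∀ x y z w, R x y z w = R z w x y)
    (hbianchi : ∀ x y z w, R x y z w + R y z x w + R z x y w = 0)
    (hRic : ∀ x y, Ric x y = ∑ i, R x (b i) y (b i))
    (hNIC : ∀ e : Fin 4 → EuclideanSpace ℝ (Fin m ⊕ Fin m), Orthonormal ℝ e →
      0 ≤ R (e 0) (e 2) (e 0) (e 2) + R (e 0) (e 3) (e 0) (e 3)
        + R (e 1) (e 2) (e 1) (e 2) + R (e 1) (e 3) (e 1) (e 3)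
        - 2 * R (e 0) (e 1) (e 2) (e 3))
    (hψanti : ∀ x y, ψ x y = - ψ y x)
    (hψvw : ∀ α β : Fin m, ψ (b (Sum.inl α)) (b (Sum.inr β)) = if α = β then lam α else 0)
    (hψvv : ∀ α β : Fin m, ψ (b (Sum.inl α)) (b (Sum.inl β)) = 0)
    (hψww : ∀ α β : Fin m, ψ (b (Sum.inr α)) (b (Sum.inr β)) = 0)
    (hlam : 0 < ∑ α, lam α ^ 2) :
    ((∑ i, ∑ j, ∑ k, Ric (b i) (b j) * ψ (b i) (b k) * ψ (b j) (b k))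
        - (∑ i, ∑ j, ∑ k, ∑ l, R (b i) (b j) (b k) (b l) * ψ (b i) (b k) * ψ (b j) (b l))
      ≥ ∑ p ∈ Finset.univ.offDiag, (|lam p.1| - |lam p.2|) ^ 2
          * |R (b (Sum.inl p.1)) (b (Sum.inr p.1)) (b (Sum.inl p.2)) (b (Sum.inr p.2))|) ∧
    (0 ≤ ∑ p ∈ Finset.univ.offDiag, (|lam p.1| - |lam p.2|) ^ 2
          * |R (b (Sum.inl p.1)) (b (Sum.inr p.1)) (b (Sum.inl p.2)) (b (Sum.inr p.2))|) ∧
    ((∀ e : Fin 4 → EuclideanSpace ℝ (Fin m ⊕ Fin m), Orthonormal ℝ e →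
        0 < R (e 0) (e 2) (e 0) (e 2) + R (e 0) (e 3) (e 0) (e 3)
          + R (e 1) (e 2) (e 1) (e 2) + R (e 1) (e 3) (e 1) (e 3)
          - 2 * R (e 0) (e 1) (e 2) (e 3)) →
      0 < (∑ i, ∑ j, ∑ k, Ric (b i) (b j) * ψ (b i) (b k) * ψ (b j) (b k))
        - (∑ i, ∑ j, ∑ k, ∑ l, R (b i) (b j) (b k) (b l) * ψ (b i) (b k) * ψ (b j) (b l))) := by
  classical
  -- basic symmetries
  have hR34 : ∀ x y z u, R x y z u = - R x y u z := by
    intro x y z u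
    rw [hpair x y z u, hanti z u x y, hpair u z x y]
  have hRxx : ∀ x z u, R x x z u = (0:ℝ) := by
    intro x z u; have := hanti x x z u; linarith
  have hswap : ∀ x y, R x y x y = R y x y x := by
    intro x y; rw [hanti x y x y, hR34 y x x y, neg_neg]
  have hb := orthonormal_iff_ite.mp b.orthonormal
  -- ψ in coordinates
  have h2' : ∀ α β : Fin m, ψ (b (Sum.inr α)) (b (Sum.inl β)) = if α = β then -lam α else 0 := by
    intro α β
    rw [hψanti, hψvw]
    rcases eq_or_ne α β with h | h
    · subst h; simp
    · simp [h, Ne.symm h]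
  -- orthonormal 4-frames
  have frame1 : ∀ α β : Fin m, α ≠ β →
      Orthonormal ℝ ![(b (Sum.inl α)), (b (Sum.inr α)), (b (Sum.inl β)), (b (Sum.inr β))] := by
    intro α β h
    rw [orthonormal_iff_ite]
    intro i j
    fin_cases i <;> fin_cases j <;>
      simp [hb, h, Ne.symm h]
  have frame2 : ∀ α β : Fin m, α ≠ β →
      Orthonormal ℝ ![(b (Sum.inl α)), (b (Sum.inr α)), (b (Sum.inl β)), -(b (Sum.inr β))] := by
    intro α β h
    rw [orthonormal_iff_ite]
    intro i j
    fin_cases i <;> fin_cases j <;>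
      simp [hb, h, Ne.symm h, inner_neg_left, inner_neg_right]
  -- isotropic curvature bounds
  have hKS : ∀ α β : Fin m, α ≠ β →
      2 * |R (b (Sum.inl α)) (b (Sum.inr α)) (b (Sum.inl β)) (b (Sum.inr β))| ≤
        (R (b (Sum.inl α)) (b (Sum.inl β)) (b (Sum.inl α)) (b (Sum.inl β)) + R (b (Sum.inl α)) (b (Sum.inr β)) (b (Sum.inl α)) (b (Sum.inr β))) + (R (b (Sum.inr α)) (b (Sum.inl β)) (b (Sum.inr α)) (b (Sum.inl β)) + R (b (Sum.inr α)) (b (Sum.inr β)) (b (Sum.inr α)) (b (Sum.inr β))) := by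
    intro α β h
    have h1 := hNIC ![(b (Sum.inl α)), (b (Sum.inr α)), (b (Sum.inl β)), (b (Sum.inr β))] (frame1 α β h)
    have h2 := hNIC ![(b (Sum.inl α)), (b (Sum.inr α)), (b (Sum.inl β)), -(b (Sum.inr β))] (frame2 α β h)
    simp only [Matrix.cons_val_zero, Matrix.cons_val_one, Matrix.head_cons,
      Matrix.cons_val_two, Matrix.tail_cons, Matrix.cons_val_three,
      map_neg, LinearMap.neg_apply, neg_neg, mul_neg, neg_mul, sub_neg_eq_add] at h1 h2
    rcases abs_cases (R (b (Sum.inl α)) (b (Sum.inr α)) (b (Sum.inl β)) (b (Sum.inr β))) with ⟨he, _⟩ | ⟨he, _⟩ <;> rw [he] <;> linarith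
  have hKS' : (∀ e : Fin 4 → EuclideanSpace ℝ (Fin m ⊕ Fin m), Orthonormal ℝ e →
        0 < R (e 0) (e 2) (e 0) (e 2) + R (e 0) (e 3) (e 0) (e 3)
          + R (e 1) (e 2) (e 1) (e 2) + R (e 1) (e 3) (e 1) (e 3)
          - 2 * R (e 0) (e 1) (e 2) (e 3)) →
      ∀ α β : Fin m, α ≠ β →
      2 * |R (b (Sum.inl α)) (b (Sum.inr α)) (b (Sum.inl β)) (b (Sum.inr β))| <
        (R (b (Sum.inl α)) (b (Sum.inl β)) (b (Sum.inl α)) (b (Sum.inl β)) + R (b (Sum.inl α)) (b (Sum.inr β)) (b (Sum.inl α)) (b (Sum.inr β))) + (R (b (Sum.inr α)) (b (Sum.inl β)) (b (Sum.inr α)) (b (Sum.inl β)) + R (b (Sum.inr α)) (b (Sum.inr β)) (b (Sum.inr α)) (b (Sum.inr β))) := by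
    intro hPIC α β h
    have h1 := hPIC ![(b (Sum.inl α)), (b (Sum.inr α)), (b (Sum.inl β)), (b (Sum.inr β))] (frame1 α β h)
    have h2 := hPIC ![(b (Sum.inl α)), (b (Sum.inr α)), (b (Sum.inl β)), -(b (Sum.inr β))] (frame2 α β h)
    simp only [Matrix.cons_val_zero, Matrix.cons_val_one, Matrix.head_cons,
      Matrix.cons_val_two, Matrix.tail_cons, Matrix.cons_val_three,
      map_neg, LinearMap.neg_apply, neg_neg, mul_neg, neg_mul, sub_neg_eq_add] at h1 h2
    rcases abs_cases (R (b (Sum.inl α)) (b (Sum.inr α)) (b (Sum.inl β)) (b (Sum.inr β))) with ⟨he, _⟩ | ⟨he, _⟩ <;> rw [he] <;> linarith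
  -- the two big sums in coordinates
  have e1 : (∑ i, ∑ j, ∑ k, Ric (b i) (b j) * ψ (b i) (b k) * ψ (b j) (b k))
      = ∑ α, (Ric (b (Sum.inl α)) (b (Sum.inl α)) + Ric (b (Sum.inr α)) (b (Sum.inr α)))
          * lam α ^ 2 :=
    aux_sum1 m lam (fun i j => Ric (b i) (b j)) (fun i k => ψ (b i) (b k)) hψvw h2' hψvv hψww
  have e2 : (∑ i, ∑ j, ∑ k, ∑ l, R (b i) (b j) (b k) (b l) * ψ (b i) (b k) * ψ (b j) (b l))
      = ∑ α, ∑ β, (R (b (Sum.inl α)) (b (Sum.inl β)) (b (Sum.inr α)) (b (Sum.inr β)) - R (b (Sum.inl α)) (b (Sum.inr β)) (b (Sum.inr α)) (b (Sum.inl β)) - R (b (Sum.inr α)) (b (Sum.inl β)) (b (Sum.inl α)) (b (Sum.inr β)) + R (b (Sum.inr α)) (b (Sum.inr β)) (b (Sum.inl α)) (b (Sum.inl β)))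
          * (lam α * lam β) :=
    aux_sum2 m lam (fun i j k l => R (b i) (b j) (b k) (b l)) (fun i k => ψ (b i) (b k))
      hψvw h2' hψvv hψww
  have e2' : ∀ α β : Fin m,
      R (b (Sum.inl α)) (b (Sum.inl β)) (b (Sum.inr α)) (b (Sum.inr β)) - R (b (Sum.inl α)) (b (Sum.inr β)) (b (Sum.inr α)) (b (Sum.inl β)) - R (b (Sum.inr α)) (b (Sum.inl β)) (b (Sum.inl α)) (b (Sum.inr β)) + R (b (Sum.inr α)) (b (Sum.inr β)) (b (Sum.inl α)) (b (Sum.inl β))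
        = 2 * R (b (Sum.inl α)) (b (Sum.inr α)) (b (Sum.inl β)) (b (Sum.inr β)) := by
    intro α β
    have hb1 := hbianchi (b (Sum.inl α)) (b (Sum.inr α)) (b (Sum.inl β)) (b (Sum.inr β))
    have p1 := hpair (b (Sum.inr α)) (b (Sum.inl β)) (b (Sum.inl α)) (b (Sum.inr β))
    have p2 := hpair (b (Sum.inr α)) (b (Sum.inr β)) (b (Sum.inl α)) (b (Sum.inl β))
    have a1 := hanti (b (Sum.inl β)) (b (Sum.inl α)) (b (Sum.inr α)) (b (Sum.inr β))
    linarith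
  have e3 : ∀ α : Fin m,
      Ric (b (Sum.inl α)) (b (Sum.inl α)) + Ric (b (Sum.inr α)) (b (Sum.inr α))
        = ∑ β, ((R (b (Sum.inl α)) (b (Sum.inl β)) (b (Sum.inl α)) (b (Sum.inl β)) + R (b (Sum.inl α)) (b (Sum.inr β)) (b (Sum.inl α)) (b (Sum.inr β))) + (R (b (Sum.inr α)) (b (Sum.inl β)) (b (Sum.inr α)) (b (Sum.inl β)) + R (b (Sum.inr α)) (b (Sum.inr β)) (b (Sum.inr α)) (b (Sum.inr β)))) := by
    intro α
    rw [hRic, hRic, Fintype.sum_sum_type, Fintype.sum_sum_type]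
    simp only [← Finset.sum_add_distrib]
  -- assemble the difference as a sum over off-diagonal pairs
  have e4 : (∑ i, ∑ j, ∑ k, Ric (b i) (b j) * ψ (b i) (b k) * ψ (b j) (b k))
        - (∑ i, ∑ j, ∑ k, ∑ l, R (b i) (b j) (b k) (b l) * ψ (b i) (b k) * ψ (b j) (b l))
      = ∑ p ∈ (Finset.univ ×ˢ Finset.univ : Finset (Fin m × Fin m)),
          (lam p.1 ^ 2 * ((R (b (Sum.inl p.1)) (b (Sum.inl p.2)) (b (Sum.inl p.1)) (b (Sum.inl p.2)) + R (b (Sum.inl p.1)) (b (Sum.inr p.2)) (b (Sum.inl p.1)) (b (Sum.inr p.2))) + (R (b (Sum.inr p.1)) (b (Sum.inl p.2)) (b (Sum.inr p.1)) (b (Sum.inl p.2)) + R (b (Sum.inr p.1)) (b (Sum.inr p.2)) (b (Sum.inr p.1)) (b (Sum.inr p.2))))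
            - 2 * (lam p.1 * lam p.2) * R (b (Sum.inl p.1)) (b (Sum.inr p.1)) (b (Sum.inl p.2)) (b (Sum.inr p.2))) := by
    rw [e1, e2, Finset.sum_product, ← Finset.sum_sub_distrib]
    refine Finset.sum_congr rfl fun α _ => ?_
    rw [e3 α, Finset.sum_mul, ← Finset.sum_sub_distrib]
    refine Finset.sum_congr rfl fun β _ => ?_
    dsimp only
    rw [e2' α β]
    ring
  have e5 : (∑ p ∈ (Finset.univ ×ˢ Finset.univ : Finset (Fin m × Fin m)),
          (lam p.1 ^ 2 * ((R (b (Sum.inl p.1)) (b (Sum.inl p.2)) (b (Sum.inl p.1)) (b (Sum.inl p.2)) + R (b (Sum.inl p.1)) (b (Sum.inr p.2)) (b (Sum.inl p.1)) (b (Sum.inr p.2))) + (R (b (Sum.inr p.1)) (b (Sum.inl p.2)) (b (Sum.inr p.1)) (b (Sum.inl p.2)) + R (b (Sum.inr p.1)) (b (Sum.inr p.2)) (b (Sum.inr p.1)) (b (Sum.inr p.2))))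
            - 2 * (lam p.1 * lam p.2) * R (b (Sum.inl p.1)) (b (Sum.inr p.1)) (b (Sum.inl p.2)) (b (Sum.inr p.2))))
      = ∑ p ∈ Finset.univ.offDiag,
          (lam p.1 ^ 2 * ((R (b (Sum.inl p.1)) (b (Sum.inl p.2)) (b (Sum.inl p.1)) (b (Sum.inl p.2)) + R (b (Sum.inl p.1)) (b (Sum.inr p.2)) (b (Sum.inl p.1)) (b (Sum.inr p.2))) + (R (b (Sum.inr p.1)) (b (Sum.inl p.2)) (b (Sum.inr p.1)) (b (Sum.inl p.2)) + R (b (Sum.inr p.1)) (b (Sum.inr p.2)) (b (Sum.inr p.1)) (b (Sum.inr p.2))))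
            - 2 * (lam p.1 * lam p.2) * R (b (Sum.inl p.1)) (b (Sum.inr p.1)) (b (Sum.inl p.2)) (b (Sum.inr p.2))) := by
    rw [← Finset.diag_union_offDiag, Finset.sum_union (Finset.disjoint_diag_offDiag _),
      Finset.sum_diag]
    have hz : ∀ α : Fin m,
        (lam α ^ 2 * ((R (b (Sum.inl α)) (b (Sum.inl α)) (b (Sum.inl α)) (b (Sum.inl α)) + R (b (Sum.inl α)) (b (Sum.inr α)) (b (Sum.inl α)) (b (Sum.inr α))) + (R (b (Sum.inr α)) (b (Sum.inl α)) (b (Sum.inr α)) (b (Sum.inl α)) + R (b (Sum.inr α)) (b (Sum.inr α)) (b (Sum.inr α)) (b (Sum.inr α))))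
          - 2 * (lam α * lam α) * R (b (Sum.inl α)) (b (Sum.inr α)) (b (Sum.inl α)) (b (Sum.inr α))) = 0 := by
      intro α
      rw [hRxx, hswap (b (Sum.inr α)) (b (Sum.inl α))]
      have := hR34 (b (Sum.inr α)) (b (Sum.inr α)) (b (Sum.inr α)) (b (Sum.inr α))
      nlinarith [hR34 (b (Sum.inr α)) (b (Sum.inr α)) (b (Sum.inr α)) (b (Sum.inr α))]
    rw [Finset.sum_eq_zero fun α _ => hz α, zero_add]
  -- symmetrization
  have hsymS : ∀ α β : Fin m,
      (R (b (Sum.inl β)) (b (Sum.inl α)) (b (Sum.inl β)) (b (Sum.inl α)) + R (b (Sum.inl β)) (b (Sum.inr α)) (b (Sum.inl β)) (b (Sum.inr α))) + (R (b (Sum.inr β)) (b (Sum.inl α)) (b (Sum.inr β)) (b (Sum.inl α)) + R (b (Sum.inr β)) (b (Sum.inr α)) (b (Sum.inr β)) (b (Sum.inr α)))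
        = (R (b (Sum.inl α)) (b (Sum.inl β)) (b (Sum.inl α)) (b (Sum.inl β)) + R (b (Sum.inl α)) (b (Sum.inr β)) (b (Sum.inl α)) (b (Sum.inr β))) + (R (b (Sum.inr α)) (b (Sum.inl β)) (b (Sum.inr α)) (b (Sum.inl β)) + R (b (Sum.inr α)) (b (Sum.inr β)) (b (Sum.inr α)) (b (Sum.inr β))) := by
    intro α β
    rw [hswap (b (Sum.inl β)) (b (Sum.inl α)), hswap (b (Sum.inl β)) (b (Sum.inr α)), hswap (b (Sum.inr β)) (b (Sum.inl α)), hswap (b (Sum.inr β)) (b (Sum.inr α))]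
    ring
  have hsymK : ∀ α β : Fin m, R (b (Sum.inl β)) (b (Sum.inr β)) (b (Sum.inl α)) (b (Sum.inr α)) = R (b (Sum.inl α)) (b (Sum.inr α)) (b (Sum.inl β)) (b (Sum.inr β)) := fun α β => hpair (b (Sum.inl β)) (b (Sum.inr β)) (b (Sum.inl α)) (b (Sum.inr α))
  have e6 : (∑ p ∈ Finset.univ.offDiag,
          (lam p.1 ^ 2 * ((R (b (Sum.inl p.1)) (b (Sum.inl p.2)) (b (Sum.inl p.1)) (b (Sum.inl p.2)) + R (b (Sum.inl p.1)) (b (Sum.inr p.2)) (b (Sum.inl p.1)) (b (Sum.inr p.2))) + (R (b (Sum.inr p.1)) (b (Sum.inl p.2)) (b (Sum.inr p.1)) (b (Sum.inl p.2)) + R (b (Sum.inr p.1)) (b (Sum.inr p.2)) (b (Sum.inr p.1)) (b (Sum.inr p.2))))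
            - 2 * (lam p.1 * lam p.2) * R (b (Sum.inl p.1)) (b (Sum.inr p.1)) (b (Sum.inl p.2)) (b (Sum.inr p.2))))
      = ∑ p ∈ Finset.univ.offDiag,
          ((lam p.1 ^ 2 + lam p.2 ^ 2) / 2
              * ((R (b (Sum.inl p.1)) (b (Sum.inl p.2)) (b (Sum.inl p.1)) (b (Sum.inl p.2)) + R (b (Sum.inl p.1)) (b (Sum.inr p.2)) (b (Sum.inl p.1)) (b (Sum.inr p.2))) + (R (b (Sum.inr p.1)) (b (Sum.inl p.2)) (b (Sum.inr p.1)) (b (Sum.inl p.2)) + R (b (Sum.inr p.1)) (b (Sum.inr p.2)) (b (Sum.inr p.1)) (b (Sum.inr p.2))))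
            - 2 * (lam p.1 * lam p.2) * R (b (Sum.inl p.1)) (b (Sum.inr p.1)) (b (Sum.inl p.2)) (b (Sum.inr p.2))) := by
    have hswapsum : (∑ p ∈ Finset.univ.offDiag,
          (lam p.1 ^ 2 * ((R (b (Sum.inl p.1)) (b (Sum.inl p.2)) (b (Sum.inl p.1)) (b (Sum.inl p.2)) + R (b (Sum.inl p.1)) (b (Sum.inr p.2)) (b (Sum.inl p.1)) (b (Sum.inr p.2))) + (R (b (Sum.inr p.1)) (b (Sum.inl p.2)) (b (Sum.inr p.1)) (b (Sum.inl p.2)) + R (b (Sum.inr p.1)) (b (Sum.inr p.2)) (b (Sum.inr p.1)) (b (Sum.inr p.2))))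
            - 2 * (lam p.1 * lam p.2) * R (b (Sum.inl p.1)) (b (Sum.inr p.1)) (b (Sum.inl p.2)) (b (Sum.inr p.2))))
        = ∑ p ∈ Finset.univ.offDiag,
          (lam p.2 ^ 2 * ((R (b (Sum.inl p.1)) (b (Sum.inl p.2)) (b (Sum.inl p.1)) (b (Sum.inl p.2)) + R (b (Sum.inl p.1)) (b (Sum.inr p.2)) (b (Sum.inl p.1)) (b (Sum.inr p.2))) + (R (b (Sum.inr p.1)) (b (Sum.inl p.2)) (b (Sum.inr p.1)) (b (Sum.inl p.2)) + R (b (Sum.inr p.1)) (b (Sum.inr p.2)) (b (Sum.inr p.1)) (b (Sum.inr p.2))))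
            - 2 * (lam p.1 * lam p.2) * R (b (Sum.inl p.1)) (b (Sum.inr p.1)) (b (Sum.inl p.2)) (b (Sum.inr p.2))) := by
      refine Finset.sum_equiv (Equiv.prodComm (Fin m) (Fin m)) (fun p => ?_) (fun p hp => ?_)
      · simp only [Finset.mem_offDiag, Finset.mem_univ, true_and, Equiv.prodComm_apply,
          Prod.fst_swap, Prod.snd_swap]
        exact ne_comm
      · simp only [Equiv.prodComm_apply, Prod.fst_swap, Prod.snd_swap]
        rw [hsymS p.2 p.1, hsymK p.2 p.1]
        ring
    have : (2:ℝ) * (∑ p ∈ Finset.univ.offDiag,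
          ((lam p.1 ^ 2 + lam p.2 ^ 2) / 2
              * ((R (b (Sum.inl p.1)) (b (Sum.inl p.2)) (b (Sum.inl p.1)) (b (Sum.inl p.2)) + R (b (Sum.inl p.1)) (b (Sum.inr p.2)) (b (Sum.inl p.1)) (b (Sum.inr p.2))) + (R (b (Sum.inr p.1)) (b (Sum.inl p.2)) (b (Sum.inr p.1)) (b (Sum.inl p.2)) + R (b (Sum.inr p.1)) (b (Sum.inr p.2)) (b (Sum.inr p.1)) (b (Sum.inr p.2))))
            - 2 * (lam p.1 * lam p.2) * R (b (Sum.inl p.1)) (b (Sum.inr p.1)) (b (Sum.inl p.2)) (b (Sum.inr p.2))))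
        = (∑ p ∈ Finset.univ.offDiag,
          (lam p.1 ^ 2 * ((R (b (Sum.inl p.1)) (b (Sum.inl p.2)) (b (Sum.inl p.1)) (b (Sum.inl p.2)) + R (b (Sum.inl p.1)) (b (Sum.inr p.2)) (b (Sum.inl p.1)) (b (Sum.inr p.2))) + (R (b (Sum.inr p.1)) (b (Sum.inl p.2)) (b (Sum.inr p.1)) (b (Sum.inl p.2)) + R (b (Sum.inr p.1)) (b (Sum.inr p.2)) (b (Sum.inr p.1)) (b (Sum.inr p.2))))
            - 2 * (lam p.1 * lam p.2) * R (b (Sum.inl p.1)) (b (Sum.inr p.1)) (b (Sum.inl p.2)) (b (Sum.inr p.2))))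
          + (∑ p ∈ Finset.univ.offDiag,
          (lam p.2 ^ 2 * ((R (b (Sum.inl p.1)) (b (Sum.inl p.2)) (b (Sum.inl p.1)) (b (Sum.inl p.2)) + R (b (Sum.inl p.1)) (b (Sum.inr p.2)) (b (Sum.inl p.1)) (b (Sum.inr p.2))) + (R (b (Sum.inr p.1)) (b (Sum.inl p.2)) (b (Sum.inr p.1)) (b (Sum.inl p.2)) + R (b (Sum.inr p.1)) (b (Sum.inr p.2)) (b (Sum.inr p.1)) (b (Sum.inr p.2))))
            - 2 * (lam p.1 * lam p.2) * R (b (Sum.inl p.1)) (b (Sum.inr p.1)) (b (Sum.inl p.2)) (b (Sum.inr p.2)))) := by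
      rw [← Finset.sum_add_distrib, Finset.mul_sum]
      refine Finset.sum_congr rfl fun p _ => ?_
      ring
    rw [← hswapsum] at this
    linarith
  -- final form of the difference
  have key : (∑ i, ∑ j, ∑ k, Ric (b i) (b j) * ψ (b i) (b k) * ψ (b j) (b k))
        - (∑ i, ∑ j, ∑ k, ∑ l, R (b i) (b j) (b k) (b l) * ψ (b i) (b k) * ψ (b j) (b l))
      = ∑ p ∈ Finset.univ.offDiag,
          ((lam p.1 ^ 2 + lam p.2 ^ 2) / 2
              * ((R (b (Sum.inl p.1)) (b (Sum.inl p.2)) (b (Sum.inl p.1)) (b (Sum.inl p.2)) + R (b (Sum.inl p.1)) (b (Sum.inr p.2)) (b (Sum.inl p.1)) (b (Sum.inr p.2))) + (R (b (Sum.inr p.1)) (b (Sum.inl p.2)) (b (Sum.inr p.1)) (b (Sum.inl p.2)) + R (b (Sum.inr p.1)) (b (Sum.inr p.2)) (b (Sum.inr p.1)) (b (Sum.inr p.2))))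
            - 2 * (lam p.1 * lam p.2) * R (b (Sum.inl p.1)) (b (Sum.inr p.1)) (b (Sum.inl p.2)) (b (Sum.inr p.2))) := by
    rw [e4, e5, e6]
  refine ⟨?_, ?_, ?_⟩
  · rw [ge_iff_le, key]
    refine Finset.sum_le_sum fun p hp => ?_
    have hne : p.1 ≠ p.2 := (Finset.mem_offDiag.mp hp).2.2
    exact aux_ineq (lam p.1) (lam p.2) _ _ (hKS p.1 p.2 hne)
  · refine Finset.sum_nonneg fun p _ => ?_
    positivity
  · intro hPIC
    rw [key]
    have hα : ∃ α : Fin m, lam α ≠ 0 := by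
      by_contra hc
      push_neg at hc
      rw [Finset.sum_eq_zero fun α _ => by rw [hc α]; ring] at hlam
      exact lt_irrefl 0 hlam
    obtain ⟨α0, hα0⟩ := hα
    have : Nontrivial (Fin m) := ⟨⟨⟨0, by omega⟩, ⟨1, by omega⟩, by simp⟩⟩
    obtain ⟨β0, hβ0⟩ := exists_ne α0
    refine Finset.sum_pos' (fun p hp => ?_) ⟨(α0, β0), ?_, ?_⟩
    · have hne : p.1 ≠ p.2 := (Finset.mem_offDiag.mp hp).2.2
      exact aux_nonneg (lam p.1) (lam p.2) _ _ (hKS p.1 p.2 hne)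
    · exact Finset.mem_offDiag.mpr ⟨Finset.mem_univ _, Finset.mem_univ _, Ne.symm hβ0⟩
    · refine aux_pos (lam α0) (lam β0) _ _ (hKS' hPIC α0 β0 (Ne.symm hβ0)) ?_
      have h1 : 0 < lam α0 ^ 2 := by positivity
      nlinarith [sq_nonneg (lam β0)]
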